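/- Let K ≥ 1 and let T_0, T_1, …, T_K be real-valued random variables on a probability space whose joint distribution is exchangeable, i.e., for every permutation σ of {0, 1, …, K}, the vector (T_{σ(0)}, …, T_{σ(K)}) has the same joint distribution as (T_0, …, T_K). Define the random variable P = (1 + #{k ∈ {1, …, K} : T_k ≥ T_0}) / (K + 1). Then for every α ∈ [0, 1], Prob(P ≤ α) ≤ α; that is, P is stochastically larger than a uniform random variable on [0,1]. -/

import Mathlib

open MeasureTheory ENNReal

/-- **Rank-based p-value validity (Proposition 2's core lemma).** If `T_0, T_1, …, T_K` are
exchangeable real-valued random variables, then the p-value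
`P = (1 + #{k ∈ {1,…,K} : T_k ≥ T_0}) / (K + 1)` is super-uniform:
`Prob(P ≤ α) ≤ α` for every `α ∈ [0, 1]`. -/
theorem exchangeable_rank_pvalue_superuniform
    {Ω : Type*} [MeasurableSpace Ω] (μ : Measure Ω) [IsProbabilityMeasure μ]
    (K : ℕ) (hK : 1 ≤ K)
    (T : Fin (K + 1) → Ω → ℝ)
    (hTmeas : ∀ k, Measurable (T k))
    -- exchangeability: for every permutation σ of {0, 1, …, K}, the vector
    -- (T_{σ(0)}, …, T_{σ(K)}) has the same joint distribution as (T_0, …, T_K)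
    (hexch : ∀ σ : Equiv.Perm (Fin (K + 1)),
      Measure.map (fun ω (i : Fin (K + 1)) => T (σ i) ω) μ =
        Measure.map (fun ω (i : Fin (K + 1)) => T i ω) μ)
    -- the p-value P = (1 + #{k ∈ {1, …, K} : T_k ≥ T_0}) / (K + 1)
    (P : Ω → ℝ)
    (hP : ∀ ω, P ω = (1 + ((Finset.univ.filter
        (fun k : Fin (K + 1) => k ≠ 0 ∧ T 0 ω ≤ T k ω)).card : ℝ)) / (K + 1)) :
    ∀ α : ℝ, 0 ≤ α → α ≤ 1 → μ {ω | P ω ≤ α} ≤ ENNReal.ofReal α := by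
  classical
  intro α hα0 hα1
  -- rank function on vectors
  set R : Fin (K + 1) → (Fin (K + 1) → ℝ) → ℕ :=
    fun i x => (Finset.univ.filter (fun k => x i ≤ x k)).card with hRdef
  set j : ℕ := Nat.floor (((K : ℝ) + 1) * α) with hjdef
  have hjα : (j : ℝ) ≤ ((K : ℝ) + 1) * α :=
    Nat.floor_le (mul_nonneg (by positivity) hα0)
  have hnpos : (0 : ℝ) < (K : ℝ) + 1 := by positivity
  -- measurability of ranks
  have hRmeas : ∀ i : Fin (K + 1), Measurable (fun x : Fin (K + 1) → ℝ => R i x) := by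
    intro i
    have hre : (fun x : Fin (K + 1) → ℝ => R i x)
        = fun x => ∑ k : Fin (K + 1), if x i ≤ x k then 1 else 0 := by
      funext x; simpa [hRdef] using (Finset.card_filter _ _)
    rw [hre]
    exact Finset.measurable_sum _ fun k _ =>
      Measurable.ite (measurableSet_le (measurable_pi_apply i) (measurable_pi_apply k))
        measurable_const measurable_const
  set V : Ω → Fin (K + 1) → ℝ := fun ω i => T i ω with hVdef
  have hVmeas : Measurable V := measurable_pi_lambda _ hTmeas
  set A : Set (Fin (K + 1) → ℝ) := {x | R 0 x ≤ j} with hAdef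
  have hAmeas : MeasurableSet A := by
    have : A = (fun x => R 0 x) ⁻¹' Set.Iic j := rfl
    rw [this]
    exact (hRmeas 0) (MeasurableSet.of_discrete)
  set E : Fin (K + 1) → Set Ω := fun i => {ω | R i (V ω) ≤ j} with hEdef
  have hEmeas : ∀ i, MeasurableSet (E i) := by
    intro i
    have : E i = (fun ω => R i (V ω)) ⁻¹' Set.Iic j := rfl
    rw [this]
    exact ((hRmeas i).comp hVmeas) (MeasurableSet.of_discrete)
  -- rank under permutation
  have hRperm : ∀ (σ : Equiv.Perm (Fin (K + 1))) (x : Fin (K + 1) → ℝ) (i : Fin (K + 1)),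
      R i (fun l => x (σ l)) = R (σ i) x := by
    intro σ x i
    simp only [hRdef]
    apply Finset.card_bij (fun k _ => σ k)
    · intro a ha
      simp only [Finset.mem_filter, Finset.mem_univ, true_and] at ha ⊢
      exact ha
    · intro a _ b _ hab
      exact σ.injective hab
    · intro b hb
      refine ⟨σ.symm b, ?_, by simp⟩
      simp only [Finset.mem_filter, Finset.mem_univ, true_and] at hb ⊢
      simpa using hb
  -- all events have the same measure
  have hEeq : ∀ i, μ (E i) = μ (E 0) := by
    intro i
    set σ : Equiv.Perm (Fin (K + 1)) := Equiv.swap 0 i with hσdef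
    have hσmeas : Measurable (fun ω (l : Fin (K + 1)) => T (σ l) ω) :=
      measurable_pi_lambda _ (fun l => hTmeas (σ l))
    have h1 : Measure.map (fun ω (l : Fin (K + 1)) => T (σ l) ω) μ A = μ (E i) := by
      rw [Measure.map_apply hσmeas hAmeas]
      congr 1
      ext ω
      simp only [Set.mem_preimage, hAdef, Set.mem_setOf_eq, hEdef]
      rw [show (fun l => T (σ l) ω) = (fun l => (V ω) (σ l)) from rfl, hRperm σ (V ω) 0]
      rw [show σ 0 = i from Equiv.swap_apply_left 0 i]
    have h2 : Measure.map V μ A = μ (E 0) := by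
      rw [Measure.map_apply hVmeas hAmeas]
      rfl
    rw [← h1, ← h2, hexch σ]
  -- the target event
  have hRc : ∀ ω, R 0 (V ω) = (Finset.univ.filter
      (fun k : Fin (K + 1) => k ≠ 0 ∧ T 0 ω ≤ T k ω)).card + 1 := by
    intro ω
    have hins : Finset.univ.filter (fun k : Fin (K + 1) => (V ω) 0 ≤ (V ω) k)
        = insert (0 : Fin (K + 1))
            (Finset.univ.filter (fun k : Fin (K + 1) => k ≠ 0 ∧ T 0 ω ≤ T k ω)) := by
      ext k
      by_cases hk : k = 0 <;> simp [hVdef, hk]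
    simp only [hRdef, hins]
    rw [Finset.card_insert_of_notMem (by simp)]
  have hevent : {ω | P ω ≤ α} = E 0 := by
    ext ω
    simp only [Set.mem_setOf_eq, hEdef]
    rw [hP ω, hRc ω, div_le_iff₀ hnpos]
    constructor
    · intro h
      rw [hjdef, Nat.le_floor_iff (mul_nonneg (by positivity) hα0)]
      push_cast
      linarith
    · intro h
      rw [hjdef, Nat.le_floor_iff (mul_nonneg (by positivity) hα0)] at h
      push_cast at h
      linarith
  -- pointwise: at most j indices have rank ≤ j
  have hbound : ∀ x : Fin (K + 1) → ℝ,
      (Finset.univ.filter (fun i => R i x ≤ j)).card ≤ j := by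
    intro x
    set S := Finset.univ.filter (fun i => R i x ≤ j) with hSdef
    rcases S.eq_empty_or_nonempty with h | h
    · simp [h]
    · obtain ⟨i0, hi0, hmin⟩ := S.exists_min_image x h
      have hsub : S ⊆ Finset.univ.filter (fun k => x i0 ≤ x k) := by
        intro k hk
        simp only [Finset.mem_filter, Finset.mem_univ, true_and]
        exact hmin k hk
      have h1 : S.card ≤ R i0 x := Finset.card_le_card hsub
      have h2 : R i0 x ≤ j := by
        have := hi0
        simp only [hSdef, Finset.mem_filter, Finset.mem_univ, true_and] at this
        exact this
      omega
  -- summing the measures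
  have hsum : ∑ i : Fin (K + 1), μ (E i) ≤ (j : ℝ≥0∞) := by
    have hind : ∀ i, μ (E i)
        = ∫⁻ ω, (E i).indicator (fun _ => (1 : ℝ≥0∞)) ω ∂μ :=
      fun i => (lintegral_indicator_one (hEmeas i)).symm
    calc ∑ i : Fin (K + 1), μ (E i)
        = ∫⁻ ω, ∑ i : Fin (K + 1), (E i).indicator (fun _ => (1 : ℝ≥0∞)) ω ∂μ := by
          rw [lintegral_finset_sum _ fun i _ => measurable_const.indicator (hEmeas i)]
          simp_rw [← hind]
      _ ≤ ∫⁻ _, (j : ℝ≥0∞) ∂μ := by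
          refine lintegral_mono fun ω => ?_
          have hcast : ∑ i : Fin (K + 1), (E i).indicator (fun _ => (1 : ℝ≥0∞)) ω
              = ((Finset.univ.filter (fun i => ω ∈ E i)).card : ℝ≥0∞) := by
            rw [Finset.card_filter]
            push_cast
            refine Finset.sum_congr rfl fun i _ => ?_
            by_cases h : ω ∈ E i <;> simp [Set.indicator_apply, h]
          rw [hcast]
          have heqF : Finset.univ.filter (fun i => ω ∈ E i)
              = Finset.univ.filter (fun i => R i (V ω) ≤ j) := by
            ext i; simp [hEdef]
          rw [heqF]
          exact (Nat.cast_le (α := ℝ≥0∞)).mpr (hbound (V ω))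
      _ = (j : ℝ≥0∞) := by simp
  have hconst : ∑ i : Fin (K + 1), μ (E i) = ((K : ℝ≥0∞) + 1) * μ (E 0) := by
    calc ∑ i : Fin (K + 1), μ (E i) = ∑ _i : Fin (K + 1), μ (E 0) := by
          exact Finset.sum_congr rfl fun i _ => hEeq i
      _ = (K + 1 : ℕ) • μ (E 0) := by simp
      _ = ((K : ℝ≥0∞) + 1) * μ (E 0) := by
          rw [nsmul_eq_mul]; push_cast; ring
  have hfinal : ((K : ℝ≥0∞) + 1) * μ (E 0) ≤ ((K : ℝ≥0∞) + 1) * ENNReal.ofReal α := by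
    refine le_trans (hconst ▸ hsum) ?_
    calc (j : ℝ≥0∞) = ENNReal.ofReal (j : ℝ) := by simp
      _ ≤ ENNReal.ofReal (((K : ℝ) + 1) * α) := ENNReal.ofReal_le_ofReal hjα
      _ = ENNReal.ofReal ((K : ℝ) + 1) * ENNReal.ofReal α :=
          ENNReal.ofReal_mul (by positivity)
      _ = ((K : ℝ≥0∞) + 1) * ENNReal.ofReal α := by
          rw [ENNReal.ofReal_add (by positivity) (by norm_num)]
          simp
  rw [hevent]
  exact (ENNReal.mul_le_mul_iff_right (by simp) (by simp)).mp hfinal
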